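/- Every eigenvalue of a 2×2 or 3×3 complex Permutation-Like Matrix is either 0 or a root of unity. -/

import Mathlib

def IsPLM {d : ℕ} (A : Matrix (Fin d) (Fin d) ℂ) : Prop :=
  (∀ i j, A i j = 0 ∨ A i j = 1) ∧ ∀ j, ∃! i, A i j = 1

theorem plm_dim_two_three_eigenvalues {d : ℕ} (hd : d = 2 ∨ d = 3)
    (A : Matrix (Fin d) (Fin d) ℂ) (hA : IsPLM A) :
    ∀ lam ∈ spectrum ℂ A, lam = 0 ∨ ∃ n ≥ 1, lam ^ n = 1 := by
  -- extract the function f with A i j = if i = f j then 1 else 0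
  obtain ⟨h01, huniq⟩ := hA
  choose f hf hfu using huniq
  have hAe : ∀ i j, A i j = if i = f j then 1 else 0 := by
    intro i j
    by_cases h : i = f j
    · simp [h, hf j]
    · rcases h01 i j with h0 | h1
      · simp [h, h0]
      · exact absurd (hfu j i h1) h
  -- powers of A
  have hpow : ∀ (k : ℕ) (i j : Fin d), (A ^ (k + 1)) i j
      = if i = f^[k + 1] j then 1 else 0 := by
    intro k
    induction k with
    | zero => intro i j; simpa using hAe i j
    | succ k ih =>
      intro i j
      have : A ^ (k + 1 + 1) = A ^ (k + 1) * A := pow_succ A (k+1)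
      rw [this, Matrix.mul_apply]
      rw [Finset.sum_eq_single (f j)]
      · rw [ih i (f j), hAe (f j) j]
        simp [Function.iterate_succ_apply]
        split_ifs <;> rfl
      · intro b _ hb
        rw [hAe b j]
        simp [hb]
      · intro h; exact absurd (Finset.mem_univ _) h
  -- pigeonhole: two powers of f coincide
  obtain ⟨a, b, hab, hfab⟩ :
      ∃ a b : ℕ, a ≠ b ∧ f^[a + 1] = f^[b + 1] := by
    obtain ⟨a, b, hab, h⟩ := Finite.exists_ne_map_eq_of_infinite
      (fun n : ℕ => f^[n + 1])
    exact ⟨a, b, hab, h⟩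
  -- wlog a < b
  obtain ⟨a, b, hab, hfab⟩ :
      ∃ a b : ℕ, a < b ∧ f^[a + 1] = f^[b + 1] := by
    rcases lt_or_gt_of_ne hab with h | h
    · exact ⟨a, b, h, hfab⟩
    · exact ⟨b, a, h, hfab.symm⟩
  have hApow : A ^ (a + 1) = A ^ (b + 1) := by
    ext i j
    rw [hpow a i j, hpow b i j, hfab]
  intro lam hlam
  by_cases hl0 : lam = 0
  · exact Or.inl hl0
  right
  -- get eigenvector
  rw [spectrum.mem_iff, Matrix.isUnit_iff_isUnit_det, isUnit_iff_ne_zero,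
    not_not] at hlam
  obtain ⟨v, hv, hmv⟩ := (Matrix.exists_mulVec_eq_zero_iff).mpr hlam
  have hAv : A.mulVec v = lam • v := by
    have h1 : (algebraMap ℂ (Matrix (Fin d) (Fin d) ℂ)) lam - A
        = lam • (1 : Matrix (Fin d) (Fin d) ℂ) - A := by
      rw [Algebra.algebraMap_eq_smul_one]
    rw [h1, Matrix.sub_mulVec, sub_eq_zero, Matrix.smul_mulVec,
      Matrix.one_mulVec] at hmv
    exact hmv.symm
  have hAnv : ∀ n : ℕ, (A ^ n).mulVec v = lam ^ n • v := by
    intro n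
    induction n with
    | zero => simp [Matrix.one_mulVec]
    | succ n ih =>
      rw [pow_succ, ← Matrix.mulVec_mulVec, hAv, Matrix.mulVec_smul, ih,
        smul_smul, pow_succ, mul_comm]
  have hkey : lam ^ (a + 1) • v = lam ^ (b + 1) • v := by
    rw [← hAnv, ← hAnv, hApow]
  obtain ⟨i, hvi⟩ := Function.ne_iff.mp hv
  have hlameq : lam ^ (a + 1) = lam ^ (b + 1) := by
    have := congrFun hkey i
    simp only [Pi.smul_apply, smul_eq_mul] at this
    exact mul_right_cancel₀ hvi this
  refine ⟨b - a, by omega, ?_⟩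
  have hsplit : lam ^ (b + 1) = lam ^ (a + 1) * lam ^ (b - a) := by
    rw [← pow_add]; congr 1; omega
  have : lam ^ (a + 1) * lam ^ (b - a) = lam ^ (a + 1) * 1 := by
    rw [mul_one, ← hsplit, hlameq]
  exact mul_left_cancel₀ (pow_ne_zero _ hl0) this
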